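/- arXiv:2310.01956 — 5 statements merged into one kernel-verified Lean document; each statement's English description precedes it below -/
import Mathlib

section
/- For a simple matroid M of rank 3 on n elements, the beta invariant of M equals 3 − 2n + Σ_{m≥2}(m−1)t_m, where t_m is the number of rank-2 flats of size m. -/
/- Chern numbers of matroids (Mannino). Background definitions. -/

open scoped Matroid
open Finset

namespace Paper

variable {α : Type*}

/-- The rank of a set in a matroid: the maximal size of an independent subset. -/
noncomputable def mrk (M : Matroid α) (X : Set α) : ℕ :=
  sSup (Set.ncard '' {I | M.Indep I ∧ I ⊆ X})

/-- A matroid is simple if it has no loops and no parallel pairs, i.e. every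
subset of the ground set with at most two elements is independent. -/
def Simple (M : Matroid α) : Prop := ∀ e ∈ M.E, ∀ f ∈ M.E, M.Indep {e, f}

/-- A matroid is loopless if every singleton of the ground set is independent. -/
def Loopless (M : Matroid α) : Prop := ∀ e ∈ M.E, M.Indep {e}

/-- A coloop is an element contained in every base. -/
def Coloop (M : Matroid α) (e : α) : Prop := e ∈ M.E ∧ ∀ B, M.IsBase B → e ∈ B

/-- `t M m` is the number of rank-2 flats of `M` of size `m`. -/
noncomputable def t (M : Matroid α) (m : ℕ) : ℕ :=
  {F : Set α | M.IsFlat F ∧ mrk M F = 2 ∧ F.ncard = m}.ncard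

/-- The first Chern number `c̄₁²` of a simple rank-3 matroid,
`9 - 5n + ∑_{m ≥ 2} (3m-4) t_m`. -/
noncomputable def c1sq (M : Matroid α) : ℤ :=
  9 - 5 * (M.E.ncard : ℤ) +
    ∑ m ∈ Finset.Icc 2 M.E.ncard, (3 * (m : ℤ) - 4) * t M m

/-- The second Chern number `c̄₂` of a simple rank-3 matroid,
`3 - 2n + ∑_{m ≥ 2} (m-1) t_m`. -/
noncomputable def c2 (M : Matroid α) : ℤ :=
  3 - 2 * (M.E.ncard : ℤ) +
    ∑ m ∈ Finset.Icc 2 M.E.ncard, ((m : ℤ) - 1) * t M m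

/-- The beta invariant of a matroid on a finite type (Crapo's formula):
`β(M) = (-1)^{r(E)} ∑_{S ⊆ E} (-1)^{|S|} r(S)`. -/
noncomputable def beta (M : Matroid α) [Fintype α] : ℤ :=
  (-1) ^ (mrk M M.E) *
    ∑ S ∈ (Set.toFinite M.E).toFinset.powerset,
      (-1 : ℤ) ^ S.card * (mrk M (S : Set α) : ℤ)

/-- `M` is the uniform matroid of rank `r` on its ground set: the independent
sets are exactly the finite subsets of the ground set of size at most `r`. -/
def IsUniform (M : Matroid α) (r : ℕ) : Prop :=
  ∀ I, I ⊆ M.E → (M.Indep I ↔ I.Finite ∧ I.ncard ≤ r)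

end Paper

open Paper

namespace Paper

open Set

variable {α : Type*} {M : Matroid α} {I X Y S L : Set α}

section mrkLemmas
variable [Fintype α]

lemma bdd (M : Matroid α) (X : Set α) : BddAbove (Set.ncard '' {I | M.Indep I ∧ I ⊆ X}) := by
  refine ⟨Nat.card α, ?_⟩
  rintro y ⟨I, -, rfl⟩
  rw [← Set.ncard_univ]
  exact Set.ncard_le_ncard (Set.subset_univ I) Set.finite_univ

lemma le_mrk (h : M.Indep I) (hIX : I ⊆ X) : I.ncard ≤ mrk M X :=
  le_csSup (bdd M X) ⟨I, ⟨h, hIX⟩, rfl⟩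

lemma mrk_eq_of_basis (hI : M.IsBasis I X) : mrk M X = I.ncard := by
  refine le_antisymm (csSup_le ⟨0, ∅, ⟨M.empty_indep, empty_subset X⟩, by simp⟩ ?_)
    (le_mrk hI.indep hI.subset)
  rintro y ⟨J, ⟨hJ, hJX⟩, rfl⟩
  obtain ⟨J', hJ'X, hJJ'⟩ := hJ.subset_isBasis_of_subset hJX hI.subset_ground
  have hcard : J'.encard = I.encard := hJ'X.encard_eq_encard hI
  have : J'.ncard = I.ncard := by rw [Set.ncard_def, hcard, ← Set.ncard_def]
  exact le_trans (Set.ncard_le_ncard hJJ' (Set.toFinite J')) this.le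

lemma mrk_mono (hX : X ⊆ M.E) (h : X ⊆ Y) : mrk M X ≤ mrk M Y := by
  obtain ⟨I, hI⟩ := M.exists_isBasis X hX
  rw [mrk_eq_of_basis hI]
  exact le_mrk hI.indep (hI.subset.trans h)

lemma mrk_le_ncard (M : Matroid α) (X : Set α) : mrk M X ≤ X.ncard := by
  refine csSup_le ⟨0, ∅, ⟨M.empty_indep, empty_subset X⟩, by simp⟩ ?_
  rintro y ⟨J, ⟨-, hJX⟩, rfl⟩
  exact Set.ncard_le_ncard hJX (Set.toFinite X)

lemma mrk_closure (hX : X ⊆ M.E) : mrk M (M.closure X) = mrk M X := by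
  obtain ⟨I, hI⟩ := M.exists_isBasis X hX
  rw [mrk_eq_of_basis hI.isBasis_closure_right, mrk_eq_of_basis hI]

lemma one_le_mrk (hs : Simple M) (hg : M.E = Set.univ) (hS : S.Nonempty) : 1 ≤ mrk M S := by
  obtain ⟨e, he⟩ := hS
  have h1 : M.Indep {e} := by
    have := hs e (by simp [hg]) e (by simp [hg])
    simpa using this
  simpa using le_mrk h1 (by simpa using he)

lemma two_le_mrk (hs : Simple M) (hg : M.E = Set.univ) (hS : 2 ≤ S.ncard) : 2 ≤ mrk M S := by
  rw [show (2:ℕ) = 1 + 1 from rfl, ← Nat.lt_iff_add_one_le, Set.one_lt_ncard_iff (S.toFinite)] at hS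
  obtain ⟨a, b, ha, hb, hab⟩ := hS
  have h1 : M.Indep {a, b} := hs a (by simp [hg]) b (by simp [hg])
  have := le_mrk h1 (by rw [Set.insert_subset_iff]; exact ⟨ha, by simpa using hb⟩)
  rwa [Set.ncard_pair hab] at this

lemma flat_closure (M : Matroid α) (X : Set α) : M.IsFlat (M.closure X) := by
  have hne : Nonempty {F // M.IsFlat F ∧ X ∩ M.E ⊆ F} :=
    ⟨⟨M.E, M.ground_isFlat, inter_subset_right⟩⟩
  have h := Matroid.IsFlat.iInter (M := M)
    (Fs := fun F : {F // M.IsFlat F ∧ X ∩ M.E ⊆ F} => F.1) (fun F => F.2.1)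
  have he : M.closure X = ⋂ F : {F // M.IsFlat F ∧ X ∩ M.E ⊆ F}, F.1 := by
    rw [Matroid.closure_def, Set.sInter_eq_iInter]; rfl
  rwa [he]

lemma closure_eq_line (hg : M.E = Set.univ) (hL : M.IsFlat L) (h2L : mrk M L = 2)
    (hSL : S ⊆ L) (h2S : 2 ≤ mrk M S) : M.closure S = L := by
  have hSE : S ⊆ M.E := by rw [hg]; exact Set.subset_univ S
  refine subset_antisymm (Set.sInter_subset_of_mem ⟨hL, inter_subset_left.trans hSL⟩) ?_
  by_contra hcon
  obtain ⟨x, hxL, hxcl⟩ := Set.not_subset.mp hcon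
  obtain ⟨I, hI⟩ := M.exists_isBasis S hSE
  have hIcard : I.ncard = mrk M S := (mrk_eq_of_basis hI).symm
  have hxclI : x ∉ M.closure I := by rwa [hI.closure_eq_closure]
  have hxI : x ∉ I := fun hxI => hxclI (M.subset_closure I (by rw [hg]; exact Set.subset_univ I) hxI)
  have hins : M.Indep (insert x I) := by
    rw [Matroid.insert_indep_iff]
    exact ⟨hI.indep, fun _ => (Set.mem_diff _).mpr ⟨by simp [hg], hxclI⟩⟩
  have hsub : insert x I ⊆ L := Set.insert_subset hxL (hI.subset.trans hSL)
  have hle := le_mrk hins hsub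
  rw [Set.ncard_insert_of_notMem hxI (Set.toFinite I), hIcard, h2L] at hle
  omega

end mrkLemmas

section helpers
open Finset
variable {α : Type*} [DecidableEq α]

lemma sum_card_le_one (T : Finset α) :
    ∑ S ∈ T.powerset.filter (fun S => S.card ≤ 1), (-1:ℤ)^S.card = 1 - T.card := by
  have hsplit : T.powerset.filter (fun S => S.card ≤ 1)
      = T.powersetCard 0 ∪ T.powersetCard 1 := by
    ext S
    simp only [Finset.mem_filter, Finset.mem_powerset, Finset.mem_union, Finset.mem_powersetCard]
    constructor
    · rintro ⟨h1, h2⟩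
      interval_cases h : S.card
      · exact Or.inl ⟨h1, rfl⟩
      · exact Or.inr ⟨h1, rfl⟩
    · rintro (⟨h1, h2⟩ | ⟨h1, h2⟩) <;> exact ⟨h1, by omega⟩
  have hdisj : Disjoint (T.powersetCard 0) (T.powersetCard 1) := by
    rw [Finset.disjoint_left]
    intro S h0 h1
    rw [Finset.mem_powersetCard] at h0 h1
    omega
  rw [hsplit, Finset.sum_union hdisj]
  have h0 : ∑ S ∈ T.powersetCard 0, (-1:ℤ)^S.card = 1 := by
    rw [Finset.powersetCard_zero]
    simp
  have h1 : ∑ S ∈ T.powersetCard 1, (-1:ℤ)^S.card = -T.card := by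
    rw [Finset.sum_congr rfl (fun S hS => by
      rw [(Finset.mem_powersetCard.mp hS).2]; norm_num : ∀ S ∈ T.powersetCard 1,
        (-1:ℤ)^S.card = -1)]
    rw [Finset.sum_const, Finset.card_powersetCard, Nat.choose_one_right]
    simp
  rw [h0, h1]
  ring

lemma sum_two_le_card (T : Finset α) (hT : T.Nonempty) :
    ∑ S ∈ T.powerset.filter (fun S => 2 ≤ S.card), (-1:ℤ)^S.card = T.card - 1 := by
  have h0 : ∑ S ∈ T.powerset, (-1:ℤ)^S.card = 0 :=
    Finset.sum_powerset_neg_one_pow_card_of_nonempty hT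
  have hsp := Finset.sum_filter_add_sum_filter_not T.powerset (fun S => S.card ≤ 1)
    (fun S => (-1:ℤ)^S.card)
  have hcong : T.powerset.filter (fun S => ¬ S.card ≤ 1)
      = T.powerset.filter (fun S => 2 ≤ S.card) :=
    Finset.filter_congr (fun S _ => by omega)
  rw [hcong, h0, sum_card_le_one T] at hsp
  linarith

end helpers
variable {α : Type*}


end Paper

open Set in
/-- The beta invariant of a simple rank-3 matroid on `n` elements equals
`3 - 2n + ∑_{m≥2}(m-1)t_m`. -/
theorem stmt_3 {α : Type*} [Fintype α] (M : Matroid α) (n : ℕ)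
    (hground : M.E = Set.univ) (hn : M.E.ncard = n)
    (hs : Simple M) (hr : mrk M M.E = 3) :
    beta M = 3 - 2 * (n : ℤ) + ∑ m ∈ Finset.Icc 2 n, ((m : ℤ) - 1) * t M m := by
  classical
  have htf : (Set.toFinite M.E).toFinset = (Finset.univ : Finset α) := by
    ext x; simp [hground]
  have hnn : (Finset.univ : Finset α).card = n := by
    rw [← hn, hground, Set.ncard_univ, Nat.card_eq_fintype_card, Finset.card_univ]
  have hsubE : ∀ X : Set α, X ⊆ M.E := fun X => by rw [hground]; exact Set.subset_univ X
  have hle3 : ∀ S : Finset α, mrk M ↑S ≤ 3 := fun S => by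
    rw [← hr]; exact mrk_mono (hsubE _) (hsubE _)
  have hn3 : 3 ≤ n := by
    rw [← hn]
    calc 3 = mrk M M.E := hr.symm
    _ ≤ M.E.ncard := mrk_le_ncard M M.E
  have huniv_ne : (Finset.univ : Finset α).Nonempty := by
    rw [← Finset.card_pos, hnn]; omega
  -- rewrite beta
  rw [beta, hr, htf]
  have key : ∑ S ∈ (Finset.univ : Finset α).powerset, (-1:ℤ)^S.card * (mrk M (S:Set α) : ℤ)
      = - ∑ S ∈ (Finset.univ : Finset α).powerset, (-1:ℤ)^S.card * (3 - (mrk M (S:Set α) : ℤ)) := by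
    have h0 : ∑ S ∈ (Finset.univ : Finset α).powerset, ((-1:ℤ)^S.card * 3) = 0 := by
      rw [← Finset.sum_mul, Finset.sum_powerset_neg_one_pow_card_of_nonempty huniv_ne, zero_mul]
    have hterm : ∀ S ∈ (Finset.univ : Finset α).powerset,
        (-1:ℤ)^S.card * (mrk M (S:Set α) : ℤ)
        = (-1:ℤ)^S.card * 3 - (-1:ℤ)^S.card * (3 - (mrk M (S:Set α) : ℤ)) := fun S _ => by ring
    rw [Finset.sum_congr rfl hterm, Finset.sum_sub_distrib, h0, zero_sub]
  rw [key]
  rw [show ((-1:ℤ)^3 * -∑ S ∈ (Finset.univ : Finset α).powerset,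
      (-1:ℤ)^S.card * (3 - (mrk M (S:Set α) : ℤ)))
      = ∑ S ∈ (Finset.univ : Finset α).powerset, (-1:ℤ)^S.card * (3 - (mrk M (S:Set α) : ℤ)) by ring]
  -- decompose 3 - r into indicators
  have hdec : ∀ S ∈ (Finset.univ : Finset α).powerset,
      (-1:ℤ)^S.card * (3 - (mrk M (S:Set α) : ℤ))
      = ((if mrk M (S:Set α) ≤ 0 then (-1:ℤ)^S.card else 0)
        + (if mrk M (S:Set α) ≤ 1 then (-1:ℤ)^S.card else 0))
        + (if mrk M (S:Set α) ≤ 2 then (-1:ℤ)^S.card else 0) := by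
    intro S _
    have h3 := hle3 S
    set k := mrk M (S:Set α) with hk
    clear_value k
    interval_cases k <;> norm_num <;> ring
  rw [Finset.sum_congr rfl hdec, Finset.sum_add_distrib, Finset.sum_add_distrib,
    ← Finset.sum_filter, ← Finset.sum_filter, ← Finset.sum_filter]
  -- A0
  have hA0 : ((Finset.univ : Finset α).powerset.filter (fun S : Finset α => mrk M (S:Set α) ≤ 0))
      = {(∅ : Finset α)} := by
    ext S
    simp only [Finset.mem_filter, Finset.mem_powerset, Finset.subset_univ, true_and,
      Finset.mem_singleton]
    constructor
    · intro h
      by_contra hne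
      have h1 : 1 ≤ mrk M (S:Set α) := one_le_mrk hs hground
        (Finset.coe_nonempty.mpr (Finset.nonempty_iff_ne_empty.mpr hne))
      omega
    · rintro rfl
      have := mrk_le_ncard M ((∅ : Finset α) : Set α)
      simpa using this
  -- A1
  have hA1 : ((Finset.univ : Finset α).powerset.filter (fun S : Finset α => mrk M (S:Set α) ≤ 1))
      = (Finset.univ : Finset α).powerset.filter (fun S => S.card ≤ 1) := by
    apply Finset.filter_congr
    intro S _
    constructor
    · intro h
      by_contra hc
      push_neg at hc
      have h2 : 2 ≤ mrk M (S:Set α) := two_le_mrk hs hground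
        (by rw [Set.ncard_coe_finset]; omega)
      omega
    · intro h
      have := mrk_le_ncard M (S:Set α)
      rw [Set.ncard_coe_finset] at this
      omega
  -- Lines
  set Lines : Finset (Set α) :=
    Finset.univ.filter (fun F : Set α => M.IsFlat F ∧ mrk M F = 2) with hLines
  -- A2
  have hA2 : ∑ S ∈ (Finset.univ : Finset α).powerset.filter
        (fun S : Finset α => mrk M (S:Set α) ≤ 2), (-1:ℤ)^S.card
      = (1 - (n:ℤ)) + ∑ L ∈ Lines, ((L.ncard : ℤ) - 1) := by
    rw [← Finset.sum_filter_add_sum_filter_not ((Finset.univ : Finset α).powerset.filter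
      (fun S : Finset α => mrk M (S:Set α) ≤ 2)) (fun S => S.card ≤ 1)]
    congr 1
    · have he : (((Finset.univ : Finset α).powerset.filter
          (fun S : Finset α => mrk M (S:Set α) ≤ 2)).filter (fun S => S.card ≤ 1))
          = (Finset.univ : Finset α).powerset.filter (fun S => S.card ≤ 1) := by
        ext S
        simp only [Finset.mem_filter, Finset.mem_powerset, Finset.subset_univ, true_and]
        constructor
        · tauto
        · intro h
          refine ⟨?_, h⟩
          have := mrk_le_ncard M (S:Set α)
          rw [Set.ncard_coe_finset] at this
          omega
      rw [he, sum_card_le_one, hnn]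
    · set Q := (((Finset.univ : Finset α).powerset.filter
        (fun S : Finset α => mrk M (S:Set α) ≤ 2)).filter (fun S => ¬ S.card ≤ 1)) with hQ
      have hmapsto : ∀ S ∈ Q, M.closure ↑S ∈ Lines := by
        intro S hS
        simp only [hQ, Finset.mem_filter, Finset.mem_powerset, Finset.subset_univ,
          true_and] at hS
        obtain ⟨hr2, hc⟩ := hS
        have h2 : 2 ≤ mrk M (S:Set α) := two_le_mrk hs hground
          (by rw [Set.ncard_coe_finset]; omega)
        have hrc : mrk M (M.closure ↑S) = 2 := by
          rw [mrk_closure (hsubE _)]; omega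
        simp only [hLines, Finset.mem_filter, Finset.mem_univ, true_and]
        exact ⟨flat_closure M _, hrc⟩
      rw [← Finset.sum_fiberwise_of_maps_to hmapsto (fun S => (-1:ℤ)^S.card)]
      refine Finset.sum_congr rfl ?_
      intro L hL
      simp only [hLines, Finset.mem_filter, Finset.mem_univ, true_and] at hL
      obtain ⟨hLflat, hL2⟩ := hL
      have hfib : Q.filter (fun S : Finset α => M.closure ↑S = L)
          = ((Set.toFinite L).toFinset.powerset).filter (fun S : Finset α => 2 ≤ S.card) := by
        ext S
        simp only [hQ, Finset.mem_filter, Finset.mem_powerset, Finset.subset_univ, true_and]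
        constructor
        · rintro ⟨⟨hr2, hc⟩, hcl⟩
          have hsub : (S:Set α) ⊆ L := by
            rw [← hcl]; exact M.subset_closure _ (hsubE _)
          refine ⟨fun x hx => ?_, by omega⟩
          rw [Set.Finite.mem_toFinset]
          exact hsub hx
        · rintro ⟨hsubfin, hc⟩
          have hsub : (S:Set α) ⊆ L := fun x hx =>
            (Set.Finite.mem_toFinset _).mp (hsubfin hx)
          have h2 : 2 ≤ mrk M (S:Set α) := two_le_mrk hs hground
            (by rw [Set.ncard_coe_finset]; omega)
          have hle2 : mrk M (S:Set α) ≤ 2 := by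
            have := mrk_mono (M := M) (hsubE ((S:Set α))) hsub
            omega
          exact ⟨⟨hle2, by omega⟩, closure_eq_line hground hLflat hL2 hsub h2⟩
      rw [hfib, sum_two_le_card]
      · rw [← Set.ncard_eq_toFinset_card L]
      · have h2L : 2 ≤ L.ncard := by
          have := mrk_le_ncard M L
          omega
        rw [← Finset.card_pos, ← Set.ncard_eq_toFinset_card L]
        omega
  -- Lines to Icc
  have hLsum : ∑ L ∈ Lines, ((L.ncard : ℤ) - 1)
      = ∑ m ∈ Finset.Icc 2 n, ((m:ℤ) - 1) * t M m := by
    have hmaps : ∀ L ∈ Lines, L.ncard ∈ Finset.Icc 2 n := by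
      intro L hL
      simp only [hLines, Finset.mem_filter, Finset.mem_univ, true_and] at hL
      rw [Finset.mem_Icc]
      refine ⟨by have := mrk_le_ncard M L; omega, ?_⟩
      rw [← hn]
      exact Set.ncard_le_ncard (hsubE L) (Set.toFinite _)
    rw [← Finset.sum_fiberwise_of_maps_to hmaps (fun L => (L.ncard:ℤ) - 1)]
    refine Finset.sum_congr rfl fun m hm => ?_
    have ht : t M m = (Lines.filter (fun L => L.ncard = m)).card := by
      rw [t, Set.ncard_eq_toFinset_card _ (Set.toFinite _)]
      congr 1
      ext F
      simp only [Set.Finite.mem_toFinset, Set.mem_setOf_eq, hLines, Finset.mem_filter,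
        Finset.mem_univ, true_and]
      tauto
    rw [Finset.sum_congr rfl (fun L hL => by
      rw [(Finset.mem_filter.mp hL).2] : ∀ L ∈ Lines.filter (fun L => L.ncard = m),
        ((L.ncard:ℤ) - 1) = ((m:ℤ) - 1)), Finset.sum_const, ht]
    push_cast
    ring
  rw [hA0, hA1, hA2, hLsum, sum_card_le_one, hnn, Finset.sum_singleton]
  simp only [Finset.card_empty, pow_zero]
  push_cast
  ring
end

section
/- Define for a simple rank-3 matroid M on n elements c̄₂(M) = 3 − 2n + Σ_{m≥2}(m−1)t_m, where t_m counts rank-2 flats of size m. Then c̄₂(M) ≥ 0. -/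
/- Chern numbers of matroids (Mannino). Background definitions. -/

open scoped Matroid
open Finset

open Paper

open Set

section Aux
variable {α : Type*} {M : Matroid α}

lemma mrk_eq_of_basis (hE : M.E.Finite) {I X : Set α} (hB : M.IsBasis I X) :
    mrk M X = I.ncard := by
  apply le_antisymm
  · refine csSup_le ⟨I.ncard, ⟨I, ⟨hB.indep, hB.subset⟩, rfl⟩⟩ ?_
    rintro m ⟨J, ⟨hJ, hJX⟩, rfl⟩
    obtain ⟨J', hJ', hJJ'⟩ := hJ.subset_isBasis'_of_subset hJX
    have h1 : J'.encard = I.encard := hJ'.encard_eq_encard hB.isBasis'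
    have hJ'fin : J'.Finite := hE.subset hJ'.indep.subset_ground
    have h2 : J.ncard ≤ J'.ncard := ncard_le_ncard hJJ' hJ'fin
    rwa [show J'.ncard = I.ncard by rw [ncard_def, h1, ← ncard_def]] at h2
  · apply le_csSup
    · refine ⟨M.E.ncard, ?_⟩
      rintro m ⟨J, ⟨hJ, -⟩, rfl⟩
      exact ncard_le_ncard hJ.subset_ground hE
    · exact ⟨I, ⟨hB.indep, hB.subset⟩, rfl⟩

lemma flat_closure (M : Matroid α) (X : Set α) : M.IsFlat (M.closure X) := by
  rw [Matroid.closure_def, Set.sInter_eq_iInter]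
  have hne : Nonempty {F : Set α // F ∈ {F | M.IsFlat F ∧ X ∩ M.E ⊆ F}} :=
    ⟨⟨M.E, M.ground_isFlat, Set.inter_subset_right⟩⟩
  exact Matroid.IsFlat.iInter fun F => F.2.1

lemma mrk_closure_eq (hE : M.E.Finite) {X : Set α} (hX : X ⊆ M.E) :
    mrk M (M.closure X) = mrk M X := by
  obtain ⟨I, hI⟩ := M.exists_isBasis X hX
  rw [mrk_eq_of_basis hE hI.isBasis_closure_right, mrk_eq_of_basis hE hI]

lemma mrk_closure_pair (hE : M.E.Finite) (hs : Simple M) {x y : α}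
    (hx : x ∈ M.E) (hy : y ∈ M.E) (hxy : x ≠ y) :
    mrk M (M.closure {x, y}) = 2 := by
  have hp : ({x, y} : Set α) ⊆ M.E := by simp [Set.insert_subset_iff, hx, hy]
  have hi : M.Indep {x, y} := hs x hx y hy
  rw [mrk_closure_eq hE hp, mrk_eq_of_basis hE hi.isBasis_self, Set.ncard_pair hxy]

lemma two_le_ncard_of_mrk_two (hE : M.E.Finite) {F : Set α} (hF : F ⊆ M.E)
    (h2 : mrk M F = 2) : 2 ≤ F.ncard := by
  obtain ⟨I, hI⟩ := M.exists_isBasis F hF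
  have h := mrk_eq_of_basis hE hI
  have h3 : I.ncard = 2 := by omega
  calc 2 = I.ncard := h3.symm
    _ ≤ F.ncard := ncard_le_ncard hI.subset (hE.subset hF)

lemma line_unique (hE : M.E.Finite) (hs : Simple M) {F : Set α} {x y : α}
    (hF : M.IsFlat F) (h2 : mrk M F = 2) (hx : x ∈ F) (hy : y ∈ F) (hxy : x ≠ y) :
    F = M.closure {x, y} := by
  have hFE := hF.subset_ground
  have hp : ({x, y} : Set α) ⊆ F := by simp [Set.insert_subset_iff, hx, hy]
  have hi : M.Indep {x, y} := hs x (hFE hx) y (hFE hy)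
  obtain ⟨J, hJ, hsub⟩ := hi.subset_isBasis_of_subset hp hFE
  have hJ2 : J.ncard = 2 := by
    have := mrk_eq_of_basis hE hJ; omega
  have hpair : ({x, y} : Set α) = J := by
    apply Set.eq_of_subset_of_ncard_le hsub ?_ (hE.subset (hJ.subset.trans hFE))
    rw [hJ2, Set.ncard_pair hxy]
  apply subset_antisymm
  · refine (hJ.subset_closure).trans ?_
    rw [← hpair]
  · rw [← hF.closure]
    exact M.closure_subset_closure hp

end Aux

/-- For a simple rank-3 matroid, `c̄₂(M) ≥ 0`. -/
theorem stmt_5 {α : Type*} (M : Matroid α) (n : ℕ) (hE : M.E.Finite)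
    (hn : M.E.ncard = n) (h3 : 3 ≤ n) (hs : Simple M) (hr : mrk M M.E = 3) :
    0 ≤ c2 M := by
  classical
  set EF : Finset α := hE.toFinset with hEF
  have hEFcard : EF.card = n := by
    rw [← hn, ncard_eq_toFinset_card _ hE]
  have hEFcoe : (↑EF : Set α) = M.E := hE.coe_toFinset
  have hmemE : ∀ {x : α}, x ∈ EF → x ∈ M.E := by
    intro x hx
    rw [← hEFcoe]
    exact Finset.mem_coe.mpr hx
  set 𝓛 : Finset (Finset α) :=
    EF.powerset.filter (fun F => M.IsFlat ↑F ∧ mrk M (↑F : Set α) = 2) with h𝓛def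
  have h𝓛mem : ∀ {F : Finset α},
      F ∈ 𝓛 ↔ (↑F : Set α) ⊆ M.E ∧ M.IsFlat ↑F ∧ mrk M (↑F : Set α) = 2 := by
    intro F
    rw [h𝓛def, Finset.mem_filter, Finset.mem_powerset, ← Finset.coe_subset, hEFcoe]
  have h𝓛E : ∀ {F : Finset α}, F ∈ 𝓛 → (↑F : Set α) ⊆ M.E := fun hF => (h𝓛mem.mp hF).1
  have hcard2 : ∀ F ∈ 𝓛, 2 ≤ F.card := by
    intro F hF
    obtain ⟨h1, h2, h3'⟩ := h𝓛mem.mp hF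
    have := two_le_ncard_of_mrk_two hE h1 h3'
    rwa [ncard_coe_finset] at this
  have hcardn : ∀ F ∈ 𝓛, F.card ≤ n := by
    intro F hF
    rw [h𝓛def, Finset.mem_filter, Finset.mem_powerset] at hF
    exact le_trans (Finset.card_le_card hF.1) hEFcard.le
  -- `t` in terms of `𝓛`
  have ht : ∀ m : ℕ, t M m = (𝓛.filter (fun F => F.card = m)).card := by
    intro m
    have himg : {F : Set α | M.IsFlat F ∧ mrk M F = 2 ∧ F.ncard = m} =
        ((𝓛.filter (fun F => F.card = m)).image (fun G : Finset α => (G : Set α)) : Finset (Set α)) := by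
      ext F
      simp only [Finset.coe_image, Set.mem_image, Finset.mem_coe, Finset.mem_filter,
        Set.mem_setOf_eq]
      constructor
      · rintro ⟨hFl, h2, hm⟩
        have hFE : F ⊆ M.E := hFl.subset_ground
        have hFfin : F.Finite := hE.subset hFE
        refine ⟨hFfin.toFinset, ⟨h𝓛mem.mpr ?_, ?_⟩, hFfin.coe_toFinset⟩
        · rw [hFfin.coe_toFinset]; exact ⟨hFE, hFl, h2⟩
        · rw [← ncard_eq_toFinset_card _ hFfin]; exact hm
      · rintro ⟨G, ⟨hG, hGm⟩, rfl⟩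
        obtain ⟨h1, h2, h3'⟩ := h𝓛mem.mp hG
        refine ⟨h2, h3', ?_⟩
        rw [ncard_coe_finset]; exact hGm
    rw [t, himg, ncard_coe_finset,
      Finset.card_image_of_injective _ Finset.coe_injective]
  -- sum identity
  have hsum : ∑ m ∈ Finset.Icc 2 n, ((m : ℤ) - 1) * t M m
      = ∑ F ∈ 𝓛, ((F.card : ℤ) - 1) := by
    rw [← Finset.sum_fiberwise_of_maps_to (g := Finset.card)
      (fun F hF => Finset.mem_Icc.mpr ⟨hcard2 F hF, hcardn F hF⟩)
      (fun F => ((F.card : ℤ) - 1))]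
    refine Finset.sum_congr rfl fun m hm => ?_
    have hfun : ∀ F ∈ 𝓛.filter (fun F => F.card = m),
        ((F.card : ℤ) - 1) = ((m : ℤ) - 1) := by
      intro F hF
      rw [(Finset.mem_filter.mp hF).2]
    rw [ht m, Finset.sum_congr rfl hfun, Finset.sum_const, nsmul_eq_mul, mul_comm]
  -- choose e
  have hne : EF.Nonempty := Finset.card_pos.mp (by omega)
  obtain ⟨e, he⟩ := hne
  have heE : e ∈ M.E := hmemE he
  obtain ⟨f, hf⟩ : (EF.erase e).Nonempty := by
    apply Finset.card_pos.mp
    rw [Finset.card_erase_of_mem he, hEFcard]; omega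
  have hfe : f ≠ e := (Finset.mem_erase.mp hf).1
  have hfE : f ∈ M.E := hmemE (Finset.mem_erase.mp hf).2
  -- finset lines
  set lineFn : α → α → Finset α :=
    fun x y => (hE.subset (M.closure_subset_ground {x, y})).toFinset with hlineFn
  have hlineCoe : ∀ x y, (↑(lineFn x y) : Set α) = M.closure {x, y} :=
    fun x y => Set.Finite.coe_toFinset _
  have hlineMem : ∀ x y, x ∈ M.E → y ∈ M.E → x ≠ y →
      lineFn x y ∈ 𝓛 ∧ x ∈ lineFn x y ∧ y ∈ lineFn x y := by
    intro x y hx hy hxy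
    have hsubE : M.closure {x, y} ⊆ M.E := M.closure_subset_ground _
    have hpE : ({x, y} : Set α) ⊆ M.E := by
      simp [Set.insert_subset_iff, hx, hy]
    have hmemxy : ({x, y} : Set α) ⊆ M.closure {x, y} := M.subset_closure _ hpE
    refine ⟨h𝓛mem.mpr ⟨by rw [hlineCoe]; exact hsubE,
      by rw [hlineCoe]; exact flat_closure M _,
      by rw [hlineCoe]; exact mrk_closure_pair hE hs hx hy hxy⟩, ?_, ?_⟩
    · rw [← Finset.mem_coe, hlineCoe]
      exact hmemxy (by simp)
    · rw [← Finset.mem_coe, hlineCoe]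
      exact hmemxy (by simp)
  -- uniqueness of lines, Finset version
  have huniq : ∀ L ∈ 𝓛, ∀ x y : α, x ∈ L → y ∈ L → x ≠ y → L = lineFn x y := by
    intro L hL x y hx hy hxy
    obtain ⟨hLE, hLfl, hL2⟩ := h𝓛mem.mp hL
    apply Finset.coe_injective
    rw [hlineCoe]
    exact line_unique hE hs hLfl hL2 (Finset.mem_coe.mpr hx) (Finset.mem_coe.mpr hy) hxy
  set L0 : Finset α := lineFn e f with hL0def
  obtain ⟨hL0𝓛, heL0, hfL0⟩ := hlineMem e f heE hfE (Ne.symm hfe)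
  have hL0EF : L0 ⊆ EF := by
    rw [← Finset.coe_subset, hEFcoe]
    exact h𝓛E hL0𝓛
  -- choose g outside L0
  obtain ⟨g, hgEF, hgL0⟩ : ∃ g ∈ EF, g ∉ L0 := by
    by_contra hcon
    push_neg at hcon
    have hEL0 : (↑L0 : Set α) = M.E := by
      apply subset_antisymm (h𝓛E hL0𝓛)
      intro x hx
      exact Finset.mem_coe.mpr (hcon x (by rw [← hEFcoe] at hx; exact Finset.mem_coe.mp hx))
    have := (h𝓛mem.mp hL0𝓛).2.2
    rw [hEL0, hr] at this
    omega
  have hgE : g ∈ M.E := hmemE hgEF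
  -- split the sum
  set 𝓛e := 𝓛.filter (fun L => e ∈ L) with h𝓛e
  set 𝓛c := 𝓛.filter (fun L => e ∉ L) with h𝓛c
  have hsplit : ∑ F ∈ 𝓛, (F.card - 1) =
      ∑ F ∈ 𝓛e, (F.card - 1) + ∑ F ∈ 𝓛c, (F.card - 1) :=
    (Finset.sum_filter_add_sum_filter_not 𝓛 _ _).symm
  -- Part 1 : lines through e
  have hpart : EF.erase e = 𝓛e.biUnion (fun L => L.erase e) := by
    ext x
    simp only [Finset.mem_biUnion, Finset.mem_erase, h𝓛e, Finset.mem_filter]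
    constructor
    · rintro ⟨hxe, hxEF⟩
      have hxE : x ∈ M.E := hmemE hxEF
      obtain ⟨hm, hxm, hem⟩ := hlineMem x e hxE heE hxe
      exact ⟨lineFn x e, ⟨hm, hem⟩, hxe, hxm⟩
    · rintro ⟨L, ⟨hL, heL⟩, hxe, hxL⟩
      refine ⟨hxe, ?_⟩
      rw [← Finset.mem_coe, hEFcoe]
      exact h𝓛E hL (Finset.mem_coe.mpr hxL)
  have hdisj : ∀ L ∈ 𝓛e, ∀ L' ∈ 𝓛e, L ≠ L' →
      Disjoint (L.erase e) (L'.erase e) := by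
    intro L hL L' hL' hLL'
    rw [Finset.disjoint_left]
    intro x hx hx'
    obtain ⟨hxe, hxL⟩ := Finset.mem_erase.mp hx
    obtain ⟨-, hxL'⟩ := Finset.mem_erase.mp hx'
    obtain ⟨hLm, heL⟩ := Finset.mem_filter.mp hL
    obtain ⟨hLm', heL'⟩ := Finset.mem_filter.mp hL'
    exact hLL' ((huniq L hLm e x heL hxL (fun h => hxe h.symm)).trans
      (huniq L' hLm' e x heL' hxL' (fun h => hxe h.symm)).symm)
  have h1 : ∑ L ∈ 𝓛e, (L.card - 1) = n - 1 := by
    have : ∑ L ∈ 𝓛e, (L.card - 1) = ∑ L ∈ 𝓛e, (L.erase e).card := by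
      refine Finset.sum_congr rfl fun L hL => ?_
      rw [Finset.card_erase_of_mem (Finset.mem_filter.mp hL).2]
    rw [this, ← Finset.card_biUnion hdisj, ← hpart, Finset.card_erase_of_mem he,
      hEFcard]
  -- Part 2 : lines avoiding e
  set A := 𝓛.filter (fun L => f ∈ L ∧ e ∉ L) with hA
  set B := ((L0.erase e).erase f).image (fun h => lineFn h g) with hB
  have hBprop : ∀ h, h ∈ (L0.erase e).erase f →
      lineFn h g ∈ 𝓛 ∧ h ∈ lineFn h g ∧ g ∈ lineFn h g ∧
        e ∉ lineFn h g ∧ f ∉ lineFn h g := by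
    intro h hh
    obtain ⟨hhf, hhe, hhL0⟩ : h ≠ f ∧ h ≠ e ∧ h ∈ L0 := by
      obtain ⟨h1', h2'⟩ := Finset.mem_erase.mp hh
      obtain ⟨h3', h4'⟩ := Finset.mem_erase.mp h2'
      exact ⟨h1', h3', h4'⟩
    have hhE : h ∈ M.E := h𝓛E hL0𝓛 (Finset.mem_coe.mpr hhL0)
    have hhg : h ≠ g := fun hEq => hgL0 (hEq ▸ hhL0)
    obtain ⟨hm, hhm, hgm⟩ := hlineMem h g hhE hgE hhg
    refine ⟨hm, hhm, hgm, ?_, ?_⟩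
    · intro hem
      have e1 := huniq _ hm e h hem hhm (fun hc => hhe hc.symm)
      have e2 := huniq L0 hL0𝓛 e h heL0 hhL0 (fun hc => hhe hc.symm)
      exact hgL0 ((e2.trans e1.symm) ▸ hgm)
    · intro hfm
      have e1 := huniq _ hm f h hfm hhm (fun hc => hhf hc.symm)
      have e2 := huniq L0 hL0𝓛 f h hfL0 hhL0 (fun hc => hhf hc.symm)
      exact hgL0 ((e2.trans e1.symm) ▸ hgm)
  have hASub : A ⊆ 𝓛c := by
    intro L hL
    obtain ⟨h1', h2'⟩ := Finset.mem_filter.mp hL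
    exact Finset.mem_filter.mpr ⟨h1', h2'.2⟩
  have hBSub : B ⊆ 𝓛c := by
    intro L hL
    obtain ⟨h, hh, rfl⟩ := Finset.mem_image.mp hL
    obtain ⟨hm, -, -, hem, -⟩ := hBprop h hh
    exact Finset.mem_filter.mpr ⟨hm, hem⟩
  have hABdisj : Disjoint A B := by
    rw [Finset.disjoint_left]
    intro L hLA hLB
    obtain ⟨-, hfL, -⟩ := Finset.mem_filter.mp hLA
    obtain ⟨h, hh, rfl⟩ := Finset.mem_image.mp hLB
    exact (hBprop h hh).2.2.2.2 hfL
  have hinj : Set.InjOn (fun h => lineFn h g) ↑((L0.erase e).erase f) := by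
    intro h hh h' hh' hEq
    by_contra hne'
    have hh2 : h ∈ (L0.erase e).erase f := Finset.mem_coe.mp hh
    have hh2' : h' ∈ (L0.erase e).erase f := Finset.mem_coe.mp hh'
    obtain ⟨hm, hhm, hgm, -, -⟩ := hBprop h hh2
    obtain ⟨hm', hhm', hgm', -, -⟩ := hBprop h' hh2'
    have hhL0 : h ∈ L0 := (Finset.mem_erase.mp (Finset.mem_erase.mp hh2).2).2
    have hhL0' : h' ∈ L0 := (Finset.mem_erase.mp (Finset.mem_erase.mp hh2').2).2
    have hEq' : lineFn h g = lineFn h' g := hEq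
    have e1 := huniq _ hm h h' hhm (by rw [hEq']; exact hhm') hne'
    have e2 := huniq L0 hL0𝓛 h h' hhL0 hhL0' hne'
    exact hgL0 ((e2.trans e1.symm) ▸ hgm)
  have hBcard : B.card = L0.card - 2 := by
    rw [hB, Finset.card_image_of_injOn hinj, Finset.card_erase_of_mem
      (Finset.mem_erase.mpr ⟨hfe, hfL0⟩), Finset.card_erase_of_mem heL0, ← hL0def]
    omega
  have h2B : L0.card - 2 ≤ ∑ L ∈ B, (L.card - 1) := by
    rw [← hBcard]
    calc B.card = ∑ _L ∈ B, 1 := by simp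
      _ ≤ ∑ L ∈ B, (L.card - 1) := by
        refine Finset.sum_le_sum fun L hL => ?_
        have := hcard2 L (Finset.mem_filter.mp (hBSub hL)).1
        omega
  have hcover : EF \ L0 ⊆ A.biUnion (fun L => L.erase f) := by
    intro x hx
    obtain ⟨hxEF, hxL0⟩ := Finset.mem_sdiff.mp hx
    have hxE : x ∈ M.E := hmemE hxEF
    have hxf : x ≠ f := fun hc => hxL0 (hc ▸ hfL0)
    obtain ⟨hm, hxm, hfm⟩ := hlineMem x f hxE hfE hxf
    have hem : e ∉ lineFn x f := by
      intro hem
      have e1 := huniq _ hm e f hem hfm (Ne.symm hfe)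
      exact hxL0 ((hL0def.trans e1.symm) ▸ hxm)
    exact Finset.mem_biUnion.mpr ⟨lineFn x f,
      Finset.mem_filter.mpr ⟨hm, hfm, hem⟩, Finset.mem_erase.mpr ⟨hxf, hxm⟩⟩
  have h2A : n - L0.card ≤ ∑ L ∈ A, (L.card - 1) := by
    calc n - L0.card = (EF \ L0).card := by
          rw [Finset.card_sdiff_of_subset hL0EF, hEFcard]
      _ ≤ (A.biUnion (fun L => L.erase f)).card := Finset.card_le_card hcover
      _ ≤ ∑ L ∈ A, (L.erase f).card := Finset.card_biUnion_le
      _ = ∑ L ∈ A, (L.card - 1) := by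
          refine Finset.sum_congr rfl fun L hL => ?_
          rw [Finset.card_erase_of_mem (Finset.mem_filter.mp hL).2.1]
  have hL0n : L0.card ≤ n := le_trans (Finset.card_le_card hL0EF) hEFcard.le
  have hL02 : 2 ≤ L0.card := hcard2 L0 hL0𝓛
  have h2 : n - 2 ≤ ∑ L ∈ 𝓛c, (L.card - 1) := by
    have hsub : A ∪ B ⊆ 𝓛c := Finset.union_subset hASub hBSub
    have : ∑ L ∈ A, (L.card - 1) + ∑ L ∈ B, (L.card - 1)
        = ∑ L ∈ A ∪ B, (L.card - 1) := (Finset.sum_union hABdisj).symm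
    have hle : ∑ L ∈ A ∪ B, (L.card - 1) ≤ ∑ L ∈ 𝓛c, (L.card - 1) :=
      Finset.sum_le_sum_of_subset hsub
    omega
  -- conclude
  have hSN : 2 * n - 3 ≤ ∑ F ∈ 𝓛, (F.card - 1) := by omega
  have hcast : ∑ F ∈ 𝓛, ((F.card : ℤ) - 1) = ((∑ F ∈ 𝓛, (F.card - 1) : ℕ) : ℤ) := by
    rw [Nat.cast_sum]
    refine Finset.sum_congr rfl fun F hF => ?_
    have := hcard2 F hF
    omega
  rw [c2, hn, hsum, hcast]
  have := hSN
  omega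
end

section
/- Let M be a simple rank-3 matroid on n elements with no coloops. Then c̄₁²(M)/c̄₂(M) = 3 if and only if M is the matroid of a finite projective plane, i.e. the number of rank-2 flats equals n and every pair of rank-2 flats meets. -/
/- Chern numbers of matroids (Mannino). Background definitions. -/

open scoped Matroid
open Finset

namespace PP
open Paper Set
open scoped Classical

variable {α : Type*} {M : Matroid α} {X I J F G : Set α} {p q e : α}

lemma flat_closure (M : Matroid α) (X : Set α) : M.IsFlat (M.closure X) := by
  rw [Matroid.closure_def]
  have hne : Nonempty ↑{F | M.IsFlat F ∧ X ∩ M.E ⊆ F} :=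
    ⟨⟨M.E, M.ground_isFlat, Set.inter_subset_right⟩⟩
  rw [Set.sInter_eq_iInter]
  exact Matroid.IsFlat.iInter fun F => F.2.1

lemma mrk_eq_of_basis' (hX : X.Finite) (hI : M.IsBasis' I X) : mrk M X = I.ncard := by
  apply IsGreatest.csSup_eq
  constructor
  · exact ⟨I, ⟨hI.indep, hI.subset⟩, rfl⟩
  · rintro m ⟨J, ⟨hJ, hJX⟩, rfl⟩
    obtain ⟨J', hJ', hJJ'⟩ := hJ.subset_isBasis'_of_subset hJX
    have h0 : J'.encard = I.encard := hJ'.encard_eq_encard hI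
    have h1 : J.ncard ≤ J'.ncard := Set.ncard_le_ncard hJJ' (hX.subset hJ'.subset)
    have h2 : J'.ncard = I.ncard := by rw [Set.ncard_def, h0, ← Set.ncard_def]
    omega

lemma ncard_le_mrk (hX : X.Finite) (hJ : M.Indep J) (hJX : J ⊆ X) :
    J.ncard ≤ mrk M X := by
  obtain ⟨I, hI⟩ := M.exists_isBasis' X
  rw [mrk_eq_of_basis' hX hI]
  obtain ⟨J', hJ', hJJ'⟩ := hJ.subset_isBasis'_of_subset hJX
  have h0 : J'.encard = I.encard := hJ'.encard_eq_encard hI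
  have h1 : J.ncard ≤ J'.ncard := Set.ncard_le_ncard hJJ' (hX.subset hJ'.subset)
  have h2 : J'.ncard = I.ncard := by rw [Set.ncard_def, h0, ← Set.ncard_def]
  omega

lemma mrk_closure_indep (hE : M.E.Finite) (hI : M.Indep I) :
    mrk M (M.closure I) = I.ncard :=
  mrk_eq_of_basis' (hE.subset (M.closure_subset_ground I)) hI.isBasis_closure.isBasis'

/-- The closure of a pair of distinct points is a line. -/
lemma closure_pair_line (hE : M.E.Finite) (hs : Simple M) (hp : p ∈ M.E) (hq : q ∈ M.E)
    (hpq : p ≠ q) : M.IsFlat (M.closure {p, q}) ∧ mrk M (M.closure {p, q}) = 2 := by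
  refine ⟨flat_closure M _, ?_⟩
  rw [mrk_closure_indep hE (hs p hp q hq), Set.ncard_pair hpq]

lemma subset_closure_pair (hp : p ∈ M.E) (hq : q ∈ M.E) :
    p ∈ M.closure {p, q} ∧ q ∈ M.closure {p, q} := by
  have h : ({p, q} : Set α) ⊆ M.closure {p, q} :=
    M.subset_closure _ (by simp [Set.insert_subset_iff, hp, hq])
  exact ⟨h (by simp), h (by simp)⟩

/-- Any line through two distinct points is the closure of the pair. -/
lemma line_eq_closure_pair (hE : M.E.Finite) (hs : Simple M) (hF : M.IsFlat F)
    (h2 : mrk M F = 2) (hp : p ∈ F) (hq : q ∈ F) (hpq : p ≠ q) :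
    F = M.closure {p, q} := by
  have hFE : F ⊆ M.E := hF.subset_ground
  have hFfin : F.Finite := hE.subset hFE
  have hind : M.Indep {p, q} := hs p (hFE hp) q (hFE hq)
  obtain ⟨J, hJ, hsub⟩ := hind.subset_isBasis'_of_subset
    (by simp [Set.insert_subset_iff, hp, hq] : ({p, q} : Set α) ⊆ F)
  have hJcard : J.ncard = 2 := by rw [← mrk_eq_of_basis' hFfin hJ, h2]
  have hJeq : ({p, q} : Set α) = J := by
    apply Set.eq_of_subset_of_ncard_le hsub _ (hFfin.subset hJ.subset)
    rw [hJcard, Set.ncard_pair hpq]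
  have h1 : M.closure J = M.closure F := hJ.closure_eq_closure
  rw [hJeq, h1, hF.closure]

/-- Every line contains two distinct points. -/
lemma line_pair (hE : M.E.Finite) (hFE : F ⊆ M.E) (h2 : mrk M F = 2) :
    ∃ p q, p ∈ F ∧ q ∈ F ∧ p ≠ q := by
  obtain ⟨J, hJ⟩ := M.exists_isBasis' F
  have hJcard : J.ncard = 2 := by rw [← mrk_eq_of_basis' (hE.subset hFE) hJ, h2]
  obtain ⟨p, q, hpq, rfl⟩ := Set.ncard_eq_two.1 hJcard
  exact ⟨p, q, hJ.subset (by simp), hJ.subset (by simp), hpq⟩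

lemma two_le_line_ncard (hE : M.E.Finite) (hFE : F ⊆ M.E) (h2 : mrk M F = 2) :
    2 ≤ F.ncard := by
  obtain ⟨p, q, hp, hq, hpq⟩ := line_pair hE hFE h2
  calc 2 = ({p, q} : Set α).ncard := (Set.ncard_pair hpq).symm
    _ ≤ F.ncard := Set.ncard_le_ncard (by simp [Set.insert_subset_iff, hp, hq])
      (hE.subset hFE)

/-- Two lines sharing two distinct points are equal. -/
lemma line_unique (hE : M.E.Finite) (hs : Simple M) (hF : M.IsFlat F) (h2F : mrk M F = 2)
    (hG : M.IsFlat G) (h2G : mrk M G = 2) (hp : p ∈ F) (hq : q ∈ F) (hp' : p ∈ G)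
    (hq' : q ∈ G) (hpq : p ≠ q) : F = G := by
  rw [line_eq_closure_pair hE hs hF h2F hp hq hpq,
    line_eq_closure_pair hE hs hG h2G hp' hq' hpq]

/-- A line is a proper subset of the ground set (rank 3). -/
lemma exists_not_mem_line (hr : mrk M M.E = 3) (hFE : F ⊆ M.E) (h2 : mrk M F = 2) :
    ∃ x ∈ M.E, x ∉ F := by
  by_contra h
  push_neg at h
  have : F = M.E := hFE.antisymm h
  rw [this, hr] at h2
  omega


/-- There is a base of size 3. -/
lemma exists_three_indep (hE : M.E.Finite) (hr : mrk M M.E = 3) :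
    ∃ x y z : α, x ∈ M.E ∧ y ∈ M.E ∧ z ∈ M.E ∧ x ≠ y ∧ x ≠ z ∧ y ≠ z ∧
      M.Indep {x, y, z} := by
  obtain ⟨I, hI⟩ := M.exists_isBasis' M.E
  have hIcard : I.ncard = 3 := by rw [← mrk_eq_of_basis' hE hI, hr]
  obtain ⟨x, y, z, hxy, hxz, hyz, rfl⟩ := Set.ncard_eq_three.1 hIcard
  have hIE : ({x, y, z} : Set α) ⊆ M.E := hI.indep.subset_ground
  exact ⟨x, y, z, hIE (by simp), hIE (by simp), hIE (by simp), hxy, hxz, hyz, hI.indep⟩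

/-- Every point misses some line. -/
lemma exists_line_not_through (hE : M.E.Finite) (hs : Simple M) (hr : mrk M M.E = 3)
    (hp : p ∈ M.E) : ∃ F, M.IsFlat F ∧ mrk M F = 2 ∧ p ∉ F := by
  obtain ⟨a, b, c, ha, hb, hc, hab, hac, hbc, hind⟩ := exists_three_indep hE hr
  -- choose x y ∈ {a,b,c} \ {p}, z the third
  have key : ∀ x y z : α, x ∈ M.E → y ∈ M.E → z ∈ M.E → x ≠ y → x ≠ z → y ≠ z →
      M.Indep {x, y, z} → p ≠ x → p ≠ y →
      ∃ F, M.IsFlat F ∧ mrk M F = 2 ∧ p ∉ F := by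
    intro x y z hx hy hz hxy hxz hyz hind hpx hpy
    have hxyI : M.Indep {x, y} := hind.subset (by intro t ht; simp at ht ⊢; tauto)
    have hxzI : M.Indep {x, z} := hind.subset (by intro t ht; simp at ht ⊢; tauto)
    have hzcl : z ∉ M.closure {x, y} := by
      rw [hxyI.notMem_closure_iff_of_notMem (by simp [Ne.symm hxz, Ne.symm hyz]) hz]
      have : (insert z {x, y} : Set α) = {x, y, z} := by
        ext t; simp; tauto
      rw [this]; exact hind
    by_cases hpcl : p ∈ M.closure {x, y}
    · -- p ≠ z, and p ∉ closure {x, z}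
      have hpz : p ≠ z := by rintro rfl; exact hzcl hpcl
      refine ⟨M.closure {x, z}, (closure_pair_line hE hs hx hz hxz).1,
        (closure_pair_line hE hs hx hz hxz).2, fun hpcl2 => ?_⟩
      have h1 := closure_pair_line hE hs hx hy hxy
      have h2 := closure_pair_line hE hs hx hz hxz
      have heq : M.closure {x, y} = M.closure {x, z} :=
        line_unique hE hs h1.1 h1.2 h2.1 h2.2 hpcl (subset_closure_pair hx hy).1
          hpcl2 (subset_closure_pair hx hz).1 hpx
      exact hzcl (heq ▸ (subset_closure_pair hx hz).2)
    · exact ⟨M.closure {x, y}, (closure_pair_line hE hs hx hy hxy).1,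
        (closure_pair_line hE hs hx hy hxy).2, hpcl⟩
  by_cases hpa : p = a
  · have hperm : ({b, c, a} : Set α) = {a, b, c} := by ext t; simp; tauto
    subst hpa
    exact key b c p hb hc hp hbc (Ne.symm hab) (Ne.symm hac)
      (by rw [hperm]; exact hind) hab hac
  by_cases hpb : p = b
  · have hperm : ({a, c, b} : Set α) = {a, b, c} := by ext t; simp; tauto
    subst hpb
    exact key a c p ha hc hp hac hab (Ne.symm hbc)
      (by rw [hperm]; exact hind) hpa hbc
  · exact key a b c ha hb hc hab hac hbc hind hpa hpb

section Lines
variable {𝓛 : Finset (Set α)}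

/-- membership characterization of the finset of lines -/
def LinesOk (M : Matroid α) (𝓛 : Finset (Set α)) : Prop :=
  ∀ F : Set α, F ∈ 𝓛 ↔ M.IsFlat F ∧ mrk M F = 2

lemma lines_subset_ground (h𝓛 : LinesOk M 𝓛) (hL : L ∈ 𝓛) : L ⊆ M.E :=
  ((h𝓛 L).1 hL).1.subset_ground

/-- the number of lines through `p` is at least the size of any line missing `p`. -/
lemma deg_lb (hE : M.E.Finite) (hs : Simple M) (h𝓛 : LinesOk M 𝓛)
    (hp : p ∈ M.E) (hL : L ∈ 𝓛) (hpL : p ∉ L) :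
    L.ncard ≤ (𝓛.filter (fun F => p ∈ F)).card := by
  have hLE : L ⊆ M.E := lines_subset_ground h𝓛 hL
  have hLflat := ((h𝓛 L).1 hL).1
  have hL2 := ((h𝓛 L).1 hL).2
  have hmaps : ∀ q ∈ L, M.closure {p, q} ∈ ((𝓛.filter (fun F => p ∈ F)) : Finset (Set α)) := by
    intro q hq
    have hq' : q ∈ M.E := hLE hq
    have hpq : p ≠ q := fun h => hpL (h ▸ hq)
    rw [Finset.mem_filter, h𝓛]
    exact ⟨⟨(closure_pair_line hE hs hp hq' hpq).1, (closure_pair_line hE hs hp hq' hpq).2⟩,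
      (subset_closure_pair hp hq').1⟩
  have hinj : Set.InjOn (fun q => M.closure {p, q}) L := by
    intro q hq q' hq' heq
    by_contra hne
    have hq2 : q ∈ M.E := hLE hq
    have hq2' : q' ∈ M.E := hLE hq'
    have hpq : p ≠ q := fun h => hpL (h ▸ hq)
    have hcl := closure_pair_line hE hs hp hq2 hpq
    have hqin : q ∈ M.closure {p, q} := (subset_closure_pair hp hq2).2
    have heq' : M.closure {p, q} = M.closure {p, q'} := heq
    have hq'in : q' ∈ M.closure {p, q} := by
      rw [heq']; exact (subset_closure_pair hp hq2').2
    have : M.closure {p, q} = L :=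
      line_unique hE hs hcl.1 hcl.2 hLflat hL2 hqin hq'in hq hq' hne
    exact hpL (this ▸ (subset_closure_pair hp hq2).1)
  have hle := Set.ncard_le_ncard_of_injOn (fun q => M.closure {p, q})
    (fun a ha => Finset.mem_coe.2 (hmaps a ha)) hinj
    (((𝓛.filter (fun F => p ∈ F)) : Finset (Set α)) : Set (Set α)).toFinite
  calc L.ncard ≤ (((𝓛.filter (fun F => p ∈ F)) : Finset (Set α)) : Set (Set α)).ncard := hle
    _ = _ := Set.ncard_coe_finset _

lemma card_filter_mem (hE : M.E.Finite) (hLE : L ⊆ M.E) :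
    (hE.toFinset.filter (fun p => p ∈ L)).card = L.ncard := by
  have : hE.toFinset.filter (fun p => p ∈ L) = (hE.subset hLE).toFinset := by
    ext x
    simp only [Finset.mem_filter, Set.Finite.mem_toFinset]
    exact ⟨fun h => h.2, fun h => ⟨hLE h, h⟩⟩
  rw [this, ← Set.ncard_eq_toFinset_card L (hE.subset hLE)]

lemma card_filter_not_mem (hE : M.E.Finite) (hLE : L ⊆ M.E) :
    (hE.toFinset.filter (fun p => p ∉ L)).card = M.E.ncard - L.ncard := by
  have h1 := Finset.card_filter_add_card_filter_not
    (s := hE.toFinset) (p := fun p => p ∈ L)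
  have h2 : hE.toFinset.card = M.E.ncard := (Set.ncard_eq_toFinset_card _ hE).symm
  have h3 := card_filter_mem hE hLE
  omega

lemma line_ncard_lt (hE : M.E.Finite) (hr : mrk M M.E = 3) (h𝓛 : LinesOk M 𝓛)
    (hL : L ∈ 𝓛) : L.ncard < M.E.ncard := by
  obtain ⟨x, hx, hxL⟩ := exists_not_mem_line hr (lines_subset_ground h𝓛 hL) ((h𝓛 L).1 hL).2
  exact Set.ncard_lt_ncard ⟨lines_subset_ground h𝓛 hL, fun h => hxL (h hx)⟩ hE

/-- number of lines avoiding p -/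
lemma card_filter_not_mem_lines (h𝓛 : LinesOk M 𝓛) (p : α) :
    (𝓛.filter (fun F => p ∉ F)).card = 𝓛.card - (𝓛.filter (fun F => p ∈ F)).card := by
  have h1 := Finset.card_filter_add_card_filter_not
    (s := 𝓛) (p := fun F => p ∈ F)
  omega

/-- Key counting lemma: if the number of lines equals the number of points, then the
degree of any point equals the size of any line missing it. -/
lemma key_deg (hE : M.E.Finite) (hs : Simple M) (hr : mrk M M.E = 3)
    (h𝓛 : LinesOk M 𝓛) (hb : 𝓛.card = M.E.ncard) :
    ∀ p ∈ M.E, ∀ L ∈ 𝓛, p ∉ L → (𝓛.filter (fun F => p ∈ F)).card = L.ncard := by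
  classical
  set n := M.E.ncard with hn
  set EFin := hE.toFinset with hEF
  have hEFcard : EFin.card = n := (Set.ncard_eq_toFinset_card _ hE).symm
  set deg := fun p => (𝓛.filter (fun F => p ∈ F)).card with hdeg
  set F1 : α → Set α → ℚ := fun p L => if p ∈ L then 0 else ((n : ℚ) - L.ncard)⁻¹ with hF1
  set F2 : α → Set α → ℚ := fun p L => if p ∈ L then 0 else ((n : ℚ) - deg p)⁻¹ with hF2
  -- positivity facts
  have hdlt : ∀ p ∈ M.E, (∃ L ∈ 𝓛, p ∉ L) → deg p < n := by
    intro p hp ⟨L, hL, hpL⟩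
    have h1 := card_filter_not_mem_lines h𝓛 (𝓛 := 𝓛) p
    have h2 : 0 < (𝓛.filter (fun F => p ∉ F)).card :=
      Finset.card_pos.2 ⟨L, Finset.mem_filter.2 ⟨hL, hpL⟩⟩
    have h3 : deg p ≤ 𝓛.card := Finset.card_filter_le _ _
    have h4 : deg p = (𝓛.filter (fun F => p ∈ F)).card := rfl
    omega
  have hexline : ∀ p ∈ M.E, ∃ L ∈ 𝓛, p ∉ L := by
    intro p hp
    obtain ⟨F, hF1', hF2', hF3'⟩ := exists_line_not_through hE hs hr hp
    exact ⟨F, (h𝓛 F).2 ⟨hF1', hF2'⟩, hF3'⟩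
  -- row sums of F1 (per line)
  have hrowF1 : ∀ L ∈ 𝓛, ∑ p ∈ EFin, F1 p L = 1 := by
    intro L hL
    have hLE := lines_subset_ground h𝓛 hL
    have hlt := line_ncard_lt hE hr h𝓛 hL
    rw [Finset.sum_ite, Finset.sum_const_zero, Finset.sum_const, zero_add,
      card_filter_not_mem hE hLE, nsmul_eq_mul]
    rw [Nat.cast_sub hlt.le]
    exact mul_inv_cancel₀ (by
      have : (L.ncard : ℚ) < n := by exact_mod_cast hlt
      linarith)
  -- column sums of F2 (per point)
  have hrowF2 : ∀ p ∈ EFin, ∑ L ∈ 𝓛, F2 p L = 1 := by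
    intro p hp
    rw [Set.Finite.mem_toFinset] at hp
    have hlt := hdlt p hp (hexline p hp)
    rw [Finset.sum_ite, Finset.sum_const_zero, Finset.sum_const, zero_add, nsmul_eq_mul]
    have hcard : (𝓛.filter (fun F => p ∉ F)).card = n - deg p := by
      rw [card_filter_not_mem_lines h𝓛, hb]
    rw [hcard, Nat.cast_sub hlt.le]
    exact mul_inv_cancel₀ (by
      have : (deg p : ℚ) < n := by exact_mod_cast hlt
      linarith)
  -- termwise inequality
  have hterm : ∀ x ∈ EFin ×ˢ 𝓛, F1 x.1 x.2 ≤ F2 x.1 x.2 := by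
    rintro ⟨p, L⟩ hx
    rw [Finset.mem_product] at hx
    obtain ⟨hp, hL⟩ := hx
    rw [Set.Finite.mem_toFinset] at hp
    by_cases hpL : p ∈ L
    · simp [hF1, hF2, hpL]
    · simp only [hF1, hF2, if_neg hpL]
      have h1 : L.ncard ≤ deg p := deg_lb hE hs h𝓛 hp hL hpL
      have h2 : deg p < n := hdlt p hp ⟨L, hL, hpL⟩
      have hpos : (0 : ℚ) < (n : ℚ) - deg p := by
        have : (deg p : ℚ) < n := by exact_mod_cast h2
        linarith
      apply inv_anti₀ hpos
      have : (L.ncard : ℚ) ≤ deg p := by exact_mod_cast h1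
      linarith
  -- total sums are equal
  have hsum1 : ∑ x ∈ EFin ×ˢ 𝓛, F1 x.1 x.2 = 𝓛.card := by
    rw [Finset.sum_product']
    rw [Finset.sum_comm]
    rw [Finset.sum_congr rfl hrowF1]
    simp
  have hsum2 : ∑ x ∈ EFin ×ˢ 𝓛, F2 x.1 x.2 = EFin.card := by
    rw [Finset.sum_product']
    rw [Finset.sum_congr rfl hrowF2]
    simp
  have htot : ∑ x ∈ EFin ×ˢ 𝓛, F1 x.1 x.2 = ∑ x ∈ EFin ×ˢ 𝓛, F2 x.1 x.2 := by
    rw [hsum1, hsum2, hb, hEFcard]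
  have hall := (Finset.sum_eq_sum_iff_of_le hterm).1 htot
  -- conclude
  intro p hp L hL hpL
  have hx : (p, L) ∈ EFin ×ˢ 𝓛 := by
    rw [Finset.mem_product]
    exact ⟨(Set.Finite.mem_toFinset hE).2 hp, hL⟩
  have := hall (p, L) hx
  simp only [hF1, hF2, if_neg hpL] at this
  have h1 : L.ncard ≤ deg p := deg_lb hE hs h𝓛 hp hL hpL
  have h2 : deg p < n := hdlt p hp ⟨L, hL, hpL⟩
  have hinv : (n : ℚ) - L.ncard = (n : ℚ) - deg p := inv_injective this
  have hfin : (L.ncard : ℚ) = (deg p : ℚ) := by linarith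
  exact_mod_cast hfin.symm

/-- If the number of lines equals the number of points, any two lines meet. -/
lemma key_meet (hE : M.E.Finite) (hs : Simple M) (hr : mrk M M.E = 3)
    (h𝓛 : LinesOk M 𝓛) (hb : 𝓛.card = M.E.ncard) :
    ∀ F G : Set α, M.IsFlat F → mrk M F = 2 → M.IsFlat G → mrk M G = 2 →
      (F ∩ G).Nonempty := by
  intro F G hF h2F hG h2G
  by_contra hdisj
  have hFG : ∀ x, x ∈ F → x ∉ G := fun x hx hxG => hdisj ⟨x, hx, hxG⟩
  obtain ⟨p, p', hp, hp', hpp'⟩ := line_pair hE hF.subset_ground h2F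
  have hpE : p ∈ M.E := hF.subset_ground hp
  have hpG : p ∉ G := hFG p hp
  have hGmem : G ∈ 𝓛 := (h𝓛 G).2 ⟨hG, h2G⟩
  have hFmem : F ∈ 𝓛 := (h𝓛 F).2 ⟨hF, h2F⟩
  have hGE : G ⊆ M.E := hG.subset_ground
  have hdeg := key_deg hE hs hr h𝓛 hb p hpE G hGmem hpG
  set T := (𝓛.filter fun F' => p ∈ F') with hT
  have hFT : F ∈ T := Finset.mem_filter.2 ⟨hFmem, hp⟩
  have hmaps : ∀ q ∈ G, M.closure {p, q} ∈ T.erase F := by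
    intro q hq
    have hqE : q ∈ M.E := hGE hq
    have hpq : p ≠ q := fun h => hpG (h ▸ hq)
    refine Finset.mem_erase.2 ⟨?_, Finset.mem_filter.2
      ⟨(h𝓛 _).2 ⟨(closure_pair_line hE hs hpE hqE hpq).1,
        (closure_pair_line hE hs hpE hqE hpq).2⟩, (subset_closure_pair hpE hqE).1⟩⟩
    intro hFeq
    have : q ∈ F := hFeq ▸ (subset_closure_pair hpE hqE).2
    exact hFG q this hq
  have hinj : Set.InjOn (fun q => M.closure {p, q}) G := by
    intro q hq q' hq' heq
    by_contra hne
    have hq2 : q ∈ M.E := hGE hq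
    have hq2' : q' ∈ M.E := hGE hq'
    have hpq : p ≠ q := fun h => hpG (h ▸ hq)
    have hcl := closure_pair_line hE hs hpE hq2 hpq
    have heq' : M.closure {p, q} = M.closure {p, q'} := heq
    have hqin : q ∈ M.closure {p, q} := (subset_closure_pair hpE hq2).2
    have hq'in : q' ∈ M.closure {p, q} := by
      rw [heq']; exact (subset_closure_pair hpE hq2').2
    have : M.closure {p, q} = G :=
      line_unique hE hs hcl.1 hcl.2 hG h2G hqin hq'in hq hq' hne
    exact hpG (this ▸ (subset_closure_pair hpE hq2).1)
  have hle := Set.ncard_le_ncard_of_injOn (fun q => M.closure {p, q})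
    (fun a ha => Finset.mem_coe.2 (hmaps a ha)) hinj
    (((T.erase F) : Finset (Set α)) : Set (Set α)).toFinite
  have hcard : (((T.erase F) : Finset (Set α)) : Set (Set α)).ncard = T.card - 1 := by
    rw [Set.ncard_coe_finset, Finset.card_erase_of_mem hFT]
  have h2 : 2 ≤ G.ncard := two_le_line_ncard hE hGE h2G
  have hTpos : 0 < T.card := Finset.card_pos.2 ⟨F, hFT⟩
  rw [hcard, hdeg] at hle
  omega

/-- If the number of lines equals the number of points and there are no coloops,
every point lies on at least 3 lines. -/
lemma deg_three (hE : M.E.Finite) (hs : Simple M) (hr : mrk M M.E = 3)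
    (h𝓛 : LinesOk M 𝓛) (hb : 𝓛.card = M.E.ncard) (hc : ∀ e, ¬ Coloop M e) :
    ∀ p ∈ M.E, 3 ≤ (𝓛.filter fun F => p ∈ F).card := by
  intro p hp
  set T := (𝓛.filter fun F => p ∈ F) with hT
  -- T has at least 2 elements
  obtain ⟨a, b, c, ha, hbE, hcE, hab, hac, hbc, hind⟩ := exists_three_indep hE hr
  obtain ⟨q, hqE, hqp⟩ : ∃ q ∈ M.E, q ≠ p := by
    by_cases h : p = a
    · exact ⟨b, hbE, fun hh => hab (h ▸ hh.symm)⟩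
    · exact ⟨a, ha, fun hh => h hh.symm⟩
  have hpq : p ≠ q := Ne.symm hqp
  have hL1 := closure_pair_line hE hs hp hqE hpq
  set L1 := M.closure {p, q} with hL1def
  have hL1mem : L1 ∈ T := Finset.mem_filter.2
    ⟨(h𝓛 _).2 ⟨hL1.1, hL1.2⟩, (subset_closure_pair hp hqE).1⟩
  obtain ⟨x, hxE, hxL1⟩ := exists_not_mem_line hr hL1.1.subset_ground hL1.2
  have hpx : p ≠ x := fun h => hxL1 (h ▸ (subset_closure_pair hp hqE).1)
  have hL2 := closure_pair_line hE hs hp hxE hpx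
  set L2 := M.closure {p, x} with hL2def
  have hL2mem : L2 ∈ T := Finset.mem_filter.2
    ⟨(h𝓛 _).2 ⟨hL2.1, hL2.2⟩, (subset_closure_pair hp hxE).1⟩
  have hL12 : L1 ≠ L2 := fun h => hxL1 (h ▸ (subset_closure_pair hp hxE).2)
  have h2le : 2 ≤ T.card := by
    have : ({L1, L2} : Finset (Set α)) ⊆ T := by
      intro Z hZ
      rcases Finset.mem_insert.1 hZ with rfl | hZ
      · exact hL1mem
      · rwa [Finset.mem_singleton.1 hZ]
    calc 2 = ({L1, L2} : Finset (Set α)).card := (Finset.card_pair hL12).symm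
      _ ≤ T.card := Finset.card_le_card this
  by_contra hlt
  push_neg at hlt
  have hT2 : T.card = 2 := le_antisymm (by omega) h2le
  obtain ⟨A, B, hAB, hTeq⟩ := Finset.card_eq_two.1 hT2
  have hAmem : A ∈ T := by rw [hTeq]; simp
  have hBmem : B ∈ T := by rw [hTeq]; simp
  have hAline : M.IsFlat A ∧ mrk M A = 2 := (h𝓛 A).1 (Finset.mem_filter.1 hAmem).1
  have hBline : M.IsFlat B ∧ mrk M B = 2 := (h𝓛 B).1 (Finset.mem_filter.1 hBmem).1
  have hpA : p ∈ A := (Finset.mem_filter.1 hAmem).2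
  have hpB : p ∈ B := (Finset.mem_filter.1 hBmem).2
  have hcover : ∀ y ∈ M.E, y ∈ A ∨ y ∈ B := by
    intro y hy
    by_cases hyp : y = p
    · exact Or.inl (hyp ▸ hpA)
    have hpy : p ≠ y := fun h => hyp h.symm
    have hLy := closure_pair_line hE hs hp hy hpy
    have : M.closure {p, y} ∈ T := Finset.mem_filter.2
      ⟨(h𝓛 _).2 ⟨hLy.1, hLy.2⟩, (subset_closure_pair hp hy).1⟩
    rw [hTeq] at this
    rcases Finset.mem_insert.1 this with h | h
    · exact Or.inl (h ▸ (subset_closure_pair hp hy).2)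
    · exact Or.inr ((Finset.mem_singleton.1 h) ▸ (subset_closure_pair hp hy).2)
  have hinter : ∀ y, y ∈ A → y ∈ B → y = p := by
    intro y hyA hyB
    by_contra hyp
    exact hAB (line_unique hE hs hAline.1 hAline.2 hBline.1 hBline.2 hyA hpA hyB hpB hyp)
  -- key_deg applies: every line not through p has exactly 2 points
  have hdegp := key_deg hE hs hr h𝓛 hb p hp
  -- a line whose ncard is 2 gives a coloop
  have final : ∀ A' B' : Set α, M.IsFlat A' → mrk M A' = 2 → M.IsFlat B' → mrk M B' = 2 →
      p ∈ A' → p ∈ B' → (∀ y ∈ M.E, y ∈ A' ∨ y ∈ B') → (∀ y, y ∈ A' → y ∈ B' → y = p) →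
      A'.ncard = 2 → False := by
    intro A' B' hA'f hA'2 hB'f hB'2 hpA' hpB' hcover' hinter' hcard2
    have hA'E : A' ⊆ M.E := hA'f.subset_ground
    have hB'E : B' ⊆ M.E := hB'f.subset_ground
    obtain ⟨q0, hq0A, hq0p⟩ := Set.exists_ne_of_one_lt_ncard (s := A') (by omega) p
    have hq0E : q0 ∈ M.E := hA'E hq0A
    have hA'eq : A' = {p, q0} := by
      symm
      apply Set.eq_of_subset_of_ncard_le
        (by simp [Set.insert_subset_iff, hpA', hq0A])
        (by rw [hcard2, Set.ncard_pair (Ne.symm hq0p)]) (hE.subset hA'E)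
    have hcoloop : Coloop M q0 := by
      refine ⟨hq0E, fun B0 hB0 => ?_⟩
      by_contra hq0B0
      have hB0E : B0 ⊆ M.E := hB0.subset_ground
      have hB0B' : B0 ⊆ B' := by
        intro y hy
        rcases hcover' y (hB0E hy) with h | h
        · rw [hA'eq] at h
          rcases h with rfl | h
          · exact hpB'
          · exact absurd (Set.mem_singleton_iff.1 h ▸ hy) hq0B0
        · exact h
      have hB0card : B0.ncard = 3 := by
        have hbas : M.IsBasis' B0 M.E := hB0.isBasis_ground.isBasis'
        have := mrk_eq_of_basis' hE hbas
        omega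
      have := ncard_le_mrk (hE.subset hB'E) hB0.indep hB0B'
      rw [hB0card, hB'2] at this
      omega
    exact hc q0 hcoloop
  -- dichotomy: A.ncard = 2 or B.ncard = 2
  have hA2 : 2 ≤ A.ncard := two_le_line_ncard hE hAline.1.subset_ground hAline.2
  have hB2 : 2 ≤ B.ncard := two_le_line_ncard hE hBline.1.subset_ground hBline.2
  have hdich : A.ncard = 2 ∨ B.ncard = 2 := by
    by_contra hno
    push_neg at hno
    have hA3 : 3 ≤ A.ncard := by omega
    have hB3 : 3 ≤ B.ncard := by omega
    -- get u ≠ u' in A \ {p}, v in B \ {p}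
    have hAp : 1 < (A \ {p}).ncard := by
      have : (A \ {p}).ncard = A.ncard - 1 :=
        Set.ncard_diff_singleton_of_mem hpA
      omega
    obtain ⟨u, w, huA, hwA, huw⟩ := (Set.one_lt_ncard_iff
      ((hE.subset hAline.1.subset_ground).subset Set.diff_subset)).1 hAp
    obtain ⟨v, hvB, hvp⟩ := Set.exists_ne_of_one_lt_ncard (s := B) (by omega) p
    obtain ⟨huA2, hup⟩ := huA
    obtain ⟨hwA2, hwp⟩ := hwA
    simp only [Set.mem_singleton_iff] at hup hwp
    have huE : u ∈ M.E := hAline.1.subset_ground huA2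
    have hwE : w ∈ M.E := hAline.1.subset_ground hwA2
    have hvE : v ∈ M.E := hBline.1.subset_ground hvB
    have huB : u ∉ B := fun h => hup (hinter u huA2 h)
    have hwB : w ∉ B := fun h => hwp (hinter w hwA2 h)
    have huv : u ≠ v := fun h => huB (h ▸ hvB)
    have hLuv := closure_pair_line hE hs huE hvE huv
    set L := M.closure {u, v} with hLdef
    have huL : u ∈ L := (subset_closure_pair huE hvE).1
    have hvL : v ∈ L := (subset_closure_pair huE hvE).2
    have hpL : p ∉ L := by
      intro hpL
      have hLA : L = A := line_unique hE hs hLuv.1 hLuv.2 hAline.1 hAline.2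
        huL hpL huA2 hpA hup
      have hvA : v ∈ A := hLA ▸ hvL
      exact hvp (hinter v hvA hvB)
    have hLmem : L ∈ 𝓛 := (h𝓛 L).2 ⟨hLuv.1, hLuv.2⟩
    have hL2' : L.ncard = 2 := by
      have h9 : T.card = L.ncard := hdegp L hLmem hpL
      omega
    have hLeq : L = {u, v} := by
      symm
      apply Set.eq_of_subset_of_ncard_le
        (by simp [Set.insert_subset_iff, huL, hvL])
        (by rw [hL2', Set.ncard_pair huv]) (hE.subset hLuv.1.subset_ground)
    have hwL : w ∉ L := by
      rw [hLeq]
      intro h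
      rcases h with h | h
      · exact huw h.symm
      · exact hwB ((Set.mem_singleton_iff.1 h) ▸ hvB)
    -- degree of w equals both 2 (via L) and B.ncard (via B)
    have hd1 := key_deg hE hs hr h𝓛 hb w hwE L hLmem hwL
    have hd2 := key_deg hE hs hr h𝓛 hb w hwE B
      (Finset.mem_filter.1 hBmem).1 hwB
    rw [hd2] at hd1
    omega
  rcases hdich with h | h
  · exact final A B hAline.1 hAline.2 hBline.1 hBline.2 hpA hpB hcover hinter h
  · exact final B A hBline.1 hBline.2 hAline.1 hAline.2 hpB hpA
      (fun y hy => (hcover y hy).symm) (fun y h1 h2 => hinter y h2 h1) h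

lemma t_eq_filter (h𝓛 : LinesOk M 𝓛) (m : ℕ) :
    t M m = (𝓛.filter fun L => L.ncard = m).card := by
  have hset : {F : Set α | M.IsFlat F ∧ mrk M F = 2 ∧ F.ncard = m}
      = ((𝓛.filter fun L => L.ncard = m : Finset (Set α)) : Set (Set α)) := by
    ext F
    simp only [Set.mem_setOf_eq, Finset.coe_filter, h𝓛 F]
    tauto
  rw [t, hset, Set.ncard_coe_finset]

lemma sum_weight (hE : M.E.Finite) (h𝓛 : LinesOk M 𝓛) (f : ℕ → ℤ) :
    ∑ m ∈ Finset.Icc 2 M.E.ncard, f m * (t M m : ℤ) = ∑ L ∈ 𝓛, f L.ncard := by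
  have hmaps : ∀ L ∈ 𝓛, L.ncard ∈ Finset.Icc 2 M.E.ncard := fun L hL =>
    Finset.mem_Icc.2 ⟨two_le_line_ncard hE (lines_subset_ground h𝓛 hL) ((h𝓛 L).1 hL).2,
      Set.ncard_le_ncard (lines_subset_ground h𝓛 hL) hE⟩
  rw [← Finset.sum_fiberwise_of_maps_to hmaps (fun L => f L.ncard)]
  refine Finset.sum_congr rfl fun m hm => ?_
  have hcongr : ∀ L ∈ 𝓛.filter (fun L => L.ncard = m), f L.ncard = f m :=
    fun L hL => by rw [(Finset.mem_filter.1 hL).2]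
  rw [Finset.sum_congr rfl hcongr, Finset.sum_const, nsmul_eq_mul, mul_comm,
    t_eq_filter h𝓛 m]

lemma c1sq_eq (hE : M.E.Finite) (h𝓛 : LinesOk M 𝓛) :
    c1sq M = 9 - 5 * (M.E.ncard : ℤ) + ∑ L ∈ 𝓛, (3 * (L.ncard : ℤ) - 4) := by
  rw [c1sq, sum_weight hE h𝓛 (fun m => 3 * (m : ℤ) - 4)]

lemma c2_eq (hE : M.E.Finite) (h𝓛 : LinesOk M 𝓛) :
    c2 M = 3 - 2 * (M.E.ncard : ℤ) + ∑ L ∈ 𝓛, ((L.ncard : ℤ) - 1) := by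
  rw [c2, sum_weight hE h𝓛 (fun m => (m : ℤ) - 1)]

lemma key_ratio (hE : M.E.Finite) (h𝓛 : LinesOk M 𝓛) :
    c1sq M - 3 * c2 M = (M.E.ncard : ℤ) - 𝓛.card := by
  rw [c1sq_eq hE h𝓛, c2_eq hE h𝓛]
  have hS : ∑ L ∈ 𝓛, (3 * (L.ncard : ℤ) - 4) - 3 * ∑ L ∈ 𝓛, ((L.ncard : ℤ) - 1)
      = - 𝓛.card := by
    rw [Finset.mul_sum, ← Finset.sum_sub_distrib]
    have : ∀ L ∈ 𝓛, (3 * (L.ncard : ℤ) - 4) - 3 * ((L.ncard : ℤ) - 1) = -1 :=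
      fun L _ => by ring
    rw [Finset.sum_congr rfl this, Finset.sum_const, nsmul_eq_mul]
    ring
  linarith

lemma incidence (hE : M.E.Finite) (h𝓛 : LinesOk M 𝓛) :
    ∑ L ∈ 𝓛, (L.ncard : ℤ) = ∑ p ∈ hE.toFinset, ((𝓛.filter fun F => p ∈ F).card : ℤ) := by
  have h1 : ∀ L ∈ 𝓛, (L.ncard : ℤ) = ∑ p ∈ hE.toFinset, (if p ∈ L then (1 : ℤ) else 0) := by
    intro L hL
    rw [Finset.sum_boole, card_filter_mem hE (lines_subset_ground h𝓛 hL)]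
  rw [Finset.sum_congr rfl h1, Finset.sum_comm]
  refine Finset.sum_congr rfl fun p hp => ?_
  rw [Finset.sum_boole]

lemma c2_ge (hE : M.E.Finite) (hs : Simple M) (hr : mrk M M.E = 3)
    (h𝓛 : LinesOk M 𝓛) (hb : 𝓛.card = M.E.ncard) (hc : ∀ e, ¬ Coloop M e) :
    3 ≤ c2 M := by
  have hd3 := deg_three hE hs hr h𝓛 hb hc
  rw [c2_eq hE h𝓛]
  have hsplit : ∑ L ∈ 𝓛, ((L.ncard : ℤ) - 1)
      = (∑ L ∈ 𝓛, (L.ncard : ℤ)) - 𝓛.card := by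
    rw [Finset.sum_sub_distrib, Finset.sum_const, nsmul_eq_mul, mul_one]
  have hcardE : hE.toFinset.card = M.E.ncard := (Set.ncard_eq_toFinset_card _ hE).symm
  have hge : (3 : ℤ) * M.E.ncard ≤ ∑ p ∈ hE.toFinset, ((𝓛.filter fun F => p ∈ F).card : ℤ) := by
    calc (3 : ℤ) * M.E.ncard = ∑ _p ∈ hE.toFinset, (3 : ℤ) := by
          rw [Finset.sum_const, nsmul_eq_mul, hcardE]; ring
      _ ≤ _ := Finset.sum_le_sum fun p hp => by
          exact_mod_cast hd3 p ((Set.Finite.mem_toFinset hE).1 hp)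
  rw [hsplit, incidence hE h𝓛, hb]
  linarith

end Lines

theorem stmt_11' {α : Type*} (M : Matroid α) (n : ℕ) (hE : M.E.Finite)
    (hn : M.E.ncard = n) (hs : Simple M) (hr : mrk M M.E = 3)
    (hc : ∀ e, ¬ Coloop M e) :
    (c1sq M : ℚ) / (c2 M : ℚ) = 3 ↔
      ({F : Set α | M.IsFlat F ∧ mrk M F = 2}.ncard = n ∧
        ∀ F G : Set α, M.IsFlat F → mrk M F = 2 → M.IsFlat G → mrk M G = 2 →
          (F ∩ G).Nonempty) := by
  classical
  subst hn
  have hlinesfin : {F : Set α | M.IsFlat F ∧ mrk M F = 2}.Finite :=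
    hE.finite_subsets.subset (fun F hF => hF.1.subset_ground)
  set 𝓛 := hlinesfin.toFinset with h𝓛def
  have h𝓛 : LinesOk M 𝓛 := fun F => hlinesfin.mem_toFinset
  have hncard : {F : Set α | M.IsFlat F ∧ mrk M F = 2}.ncard = 𝓛.card :=
    Set.ncard_eq_toFinset_card _ hlinesfin
  constructor
  · intro hratio
    have hc2ne : (c2 M : ℚ) ≠ 0 := by
      intro h
      rw [h, div_zero] at hratio
      norm_num at hratio
    have heq : (c1sq M : ℚ) = 3 * c2 M := by
      rw [div_eq_iff hc2ne] at hratio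
      linarith
    have heqZ : c1sq M = 3 * c2 M := by exact_mod_cast heq
    have hkey := key_ratio hE h𝓛
    have hb : 𝓛.card = M.E.ncard := by omega
    exact ⟨by rw [hncard, hb], key_meet hE hs hr h𝓛 hb⟩
  · rintro ⟨hcount, hmeet⟩
    have hb : 𝓛.card = M.E.ncard := by rw [← hncard]; exact hcount
    have h3 : (3 : ℤ) ≤ c2 M := c2_ge hE hs hr h𝓛 hb hc
    have hkey := key_ratio hE h𝓛
    have heqZ : c1sq M = 3 * c2 M := by omega
    have hc2ne : (c2 M : ℚ) ≠ 0 := by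
      intro h
      have : c2 M = 0 := by exact_mod_cast h
      omega
    rw [heqZ]
    push_cast
    rw [mul_div_assoc, div_self hc2ne, mul_one]

end PP

open Paper

/-- For a simple rank-3 matroid on `n` elements with no coloops,
`c̄₁²(M)/c̄₂(M) = 3` iff `M` is the matroid of a finite projective plane, i.e. the
number of rank-2 flats equals `n` and every two rank-2 flats meet. -/
theorem stmt_11 {α : Type*} (M : Matroid α) (n : ℕ) (hE : M.E.Finite)
    (hn : M.E.ncard = n) (hs : Simple M) (hr : mrk M M.E = 3)
    (hc : ∀ e, ¬ Coloop M e) :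
    (c1sq M : ℚ) / (c2 M : ℚ) = 3 ↔
      ({F : Set α | M.IsFlat F ∧ mrk M F = 2}.ncard = n ∧
        ∀ F G : Set α, M.IsFlat F → mrk M F = 2 → M.IsFlat G → mrk M G = 2 →
          (F ∩ G).Nonempty) := by
  exact PP.stmt_11' M n hE hn hs hr hc
end

section
/- For every q ≥ 2, the ratio of the Chern numbers of the projective plane matroid satisfies c̄₁²(PG(2,q)) / c̄₂(PG(2,q)) = 3. -/
/- Chern numbers of matroids (Mannino). Background definitions. -/

open scoped Matroid
open Finset

open Paper

/-- For `q ≥ 2`, the ratio of Chern numbers of the projective plane matroid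
`PG(2,q)` satisfies `c̄₁²/c̄₂ = 3`. -/
theorem stmt_13 {α : Type*} (M : Matroid α) (q : ℕ) (hq : 2 ≤ q) (hE : M.E.Finite)
    (hn : M.E.ncard = q ^ 2 + q + 1) (hs : Simple M) (hr : mrk M M.E = 3)
    (ht : t M (q + 1) = q ^ 2 + q + 1) (ht' : ∀ m, m ≠ q + 1 → t M m = 0) :
    (c1sq M : ℚ) / (c2 M : ℚ) = 3 := by
  have hmem : q + 1 ∈ Finset.Icc 2 M.E.ncard := by
    rw [hn]; simp [Finset.mem_Icc]; nlinarith
  have hsum : ∀ f : ℕ → ℤ,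
      (∑ m ∈ Finset.Icc 2 M.E.ncard, f m * t M m) = f (q + 1) * (q ^ 2 + q + 1) := by
    intro f
    rw [Finset.sum_eq_single (q + 1)]
    · rw [ht]; push_cast; ring
    · intro b _ hb; rw [ht' b hb]; ring
    · intro h; exact absurd hmem h
  have h1 : c1sq M = 3 * c2 M := by
    unfold c1sq c2
    rw [hsum (fun m => 3 * (m : ℤ) - 4), hsum (fun m => (m : ℤ) - 1), hn]
    push_cast
    ring
  have h2 : c2 M ≠ 0 := by
    unfold c2
    rw [hsum (fun m => (m : ℤ) - 1), hn]
    push_cast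
    nlinarith [sq_nonneg (q : ℤ)]
  rw [h1]
  push_cast
  rw [mul_div_assoc, div_self (by exact_mod_cast h2), mul_one]
end

section
/- The Chern numbers of the uniform matroid U_{d+1,n} are c̄₁^{k₁}·…·c̄_d^{k_d}(U_{d+1,n}) = (−1)^d · Π_{i=1}^{d} C(n − (d−i) − 2, i)^{k_i}, for any nonnegative integers k₁,…,k_d with Σ i·k_i = d. -/
open Finset

/-- The Chern numbers of the uniform matroid `U_{d+1,n}`:
`c̄₁^{k₁}⋯c̄_d^{k_d}(U_{d+1,n}) = (-1)^d ∏_{i=1}^d C(n-(d-i)-2, i)^{k_i}`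
whenever `∑ i·k_i = d`.

The Minkowski weight ring of the Bergman fan is encoded abstractly by a
commutative ring `A`. The element `B` is the Bergman fan of `U_{d,n}` with unit
weights, whose powers `B^k` are the Bergman fans of `U_{d-k+1,n}` with unit
weights; the CSM cycles of `U_{d+1,n}` satisfy
`csm_j = (-1)^{d-j} C(n-j-2, d-j) · B^{d-j}`, and the weight-at-the-origin map
`w` satisfies `w (z • B^d) = z`. The Chern number is
`w (csm_{d-1}^{k₁} ⋯ csm_0^{k_d}) = w (∏_{i=1}^d csm_{d-i}^{k_i})`. -/
theorem stmt_18 (d n : ℕ) (hd : 1 ≤ d) (hn : d + 1 ≤ n)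
    (k : ℕ → ℕ) (hk : ∑ i ∈ Finset.Icc 1 d, i * k i = d)
    (A : Type*) [CommRing A] (B : A) (w : A → ℤ) (csm : ℕ → A)
    (hcsm : ∀ j, j ≤ d →
      csm j = (((-1 : ℤ) ^ (d - j)) * ((n - j - 2).choose (d - j) : ℤ)) • B ^ (d - j))
    (hw : ∀ z : ℤ, w (z • B ^ d) = z) :
    w (∏ i ∈ Finset.Icc 1 d, (csm (d - i)) ^ (k i)) =
      (-1 : ℤ) ^ d * ∏ i ∈ Finset.Icc 1 d, ((n - (d - i) - 2).choose i : ℤ) ^ (k i) := by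
  have hterm : ∀ i ∈ Finset.Icc 1 d, (csm (d - i)) ^ (k i)
      = (((((-1 : ℤ) ^ i * ((n - (d - i) - 2).choose i : ℤ)) ^ (k i) : ℤ)) : A) * B ^ (i * k i) := by
    intro i hi
    simp only [Finset.mem_Icc] at hi
    rw [hcsm (d - i) (Nat.sub_le _ _), Nat.sub_sub_self hi.2, zsmul_eq_mul, mul_pow,
      ← pow_mul, Int.cast_pow]
  rw [Finset.prod_congr rfl hterm, Finset.prod_mul_distrib,
    Finset.prod_pow_eq_pow_sum, hk]
  have : (∏ i ∈ Finset.Icc 1 d,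
      ((((-1 : ℤ) ^ i * ((n - (d - i) - 2).choose i : ℤ)) ^ (k i) : ℤ) : A)) * B ^ d
      = (∏ i ∈ Finset.Icc 1 d,
        (((-1 : ℤ) ^ i * ((n - (d - i) - 2).choose i : ℤ)) ^ (k i))) • B ^ d := by
    rw [zsmul_eq_mul, Int.cast_prod]
  rw [this, hw]
  simp only [mul_pow, Finset.prod_mul_distrib, ← pow_mul]
  rw [Finset.prod_pow_eq_pow_sum, hk]
end
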